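/- arXiv:math/0407020 — 2 statements merged into one kernel-verified Lean document; each statement's English description precedes it below -/
import Mathlib

section
/- Let f be a complex function that is complex differentiable on a neighborhood of the closed disc of center c and radius R > 0, let z_1,…,z_N be N distinct points of the open disc of center c and radius R, let ω(z) = ∏_{k=1}^N (z − z_k), and let p(z) = Σ_{j=1}^N f(z_j) ℓ_j(z) be the Lagrange interpolant of f at the nodes z_k. Then for every z in the open disc, the interpolation remainder satisfies f(z) − p(z) = (ω(z)/(2πi)) ∮_{|ζ−c|=R} f(ζ) / ((ζ − z) ω(ζ)) dζ. -/
open Finset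

section AuxLemmas
open Polynomial


lemma lagrange_key (N : ℕ) (zs : Fin N → ℂ) (hz : Function.Injective zs)
    (z : ℂ) (hzn : ∀ i, z ≠ zs i) (ζ : ℂ) :
    ∏ k, (ζ - zs k) - ∏ k, (z - zs k) =
      (ζ - z) * ∑ j, ((∏ k ∈ Finset.univ.erase j, (z - zs k)) /
          (∏ k ∈ Finset.univ.erase j, (zs j - zs k))) * ∏ k ∈ Finset.univ.erase j, (ζ - zs k) := by
  rcases Nat.eq_zero_or_pos N with hN | hN
  · subst hN; simp
  set r : Fin N → ℂ := fun j => ∏ k ∈ Finset.univ.erase j, (z - zs k) with hr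
  set P : ℂ[X] := (∏ k, (X - C (zs k))) - C (∏ k, (z - zs k)) with hP
  have hdegprod : (∏ k, (X - C (zs k)) : ℂ[X]).degree = N := by
    rw [degree_prod]
    simp [degree_X_sub_C]
  have hdegP : P.degree = N := by
    rw [hP, degree_sub_eq_left_of_degree_lt]
    · exact hdegprod
    · rw [hdegprod]
      exact lt_of_le_of_lt degree_C_le (by exact_mod_cast hN)
  have hP0 : P ≠ 0 := by
    intro h
    rw [h, degree_zero] at hdegP
    exact (by simp : (⊥ : WithBot ℕ) ≠ (N : WithBot ℕ)) hdegP
  have hroot : P.IsRoot z := by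
    simp [hP, IsRoot, eval_prod]
  set Q := P /ₘ (X - C z) with hQ
  have hPQ : (X - C z) * Q = P := (mul_divByMonic_eq_iff_isRoot).mpr hroot
  have hdegQ : Q.degree < ((Finset.univ : Finset (Fin N)).card : WithBot ℕ) := by
    have h1 := degree_divByMonic_lt P (X - C z) hP0 (by simp [degree_X_sub_C])
    rw [Finset.card_univ, Fintype.card_fin]
    calc Q.degree < P.degree := h1
      _ = N := hdegP
  have hQval : ∀ i, Q.eval (zs i) = r i := by
    intro i
    have h1 : P.eval (zs i) = (zs i - z) * Q.eval (zs i) := by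
      rw [← hPQ]; simp
    have h2 : P.eval (zs i) = -(∏ k, (z - zs k)) := by
      rw [hP]
      simp only [eval_sub, eval_prod, eval_X, eval_C]
      rw [Finset.prod_eq_zero (Finset.mem_univ i) (sub_self (zs i))]
      ring
    have h3 : (∏ k, (z - zs k)) = (z - zs i) * r i :=
      (Finset.mul_prod_erase _ _ (Finset.mem_univ i)).symm
    have h4 : zs i - z ≠ 0 := sub_ne_zero.mpr fun h => hzn i h.symm
    have h5 : (zs i - z) * Q.eval (zs i) = (zs i - z) * r i := by
      rw [← h1, h2, h3]; ring
    exact mul_left_cancel₀ h4 h5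
  have hQinterp : Q = Lagrange.interpolate Finset.univ zs r :=
    Lagrange.eq_interpolate_of_eval_eq _ hz.injOn hdegQ fun i _ => hQval i
  have heval : Q.eval ζ = ∑ j, ((∏ k ∈ Finset.univ.erase j, (z - zs k)) /
          (∏ k ∈ Finset.univ.erase j, (zs j - zs k))) * ∏ k ∈ Finset.univ.erase j, (ζ - zs k) := by
    rw [hQinterp, Lagrange.interpolate_apply, eval_finset_sum]
    refine Finset.sum_congr rfl fun j _ => ?_
    rw [eval_mul, eval_C, Lagrange.basis, eval_prod]
    simp only [Lagrange.basisDivisor, eval_mul, eval_smul, eval_sub, eval_X, eval_C, smul_eq_mul]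
    rw [Finset.prod_mul_distrib, Finset.prod_inv_distrib]
    rw [div_eq_mul_inv]
    ring
  calc ∏ k, (ζ - zs k) - ∏ k, (z - zs k) = P.eval ζ := by
        rw [hP]; simp [eval_prod]
    _ = (ζ - z) * Q.eval ζ := by rw [← hPQ]; simp
    _ = _ := by rw [heval]

lemma circleIntegral_finset_sum {ι : Type*} (s : Finset ι) (F : ι → ℂ → ℂ) (c : ℂ) (R : ℝ)
    (h : ∀ i ∈ s, CircleIntegrable (F i) c R) :
    (∮ z in C(c, R), ∑ i ∈ s, F i z) = ∑ i ∈ s, ∮ z in C(c, R), F i z := by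
  simp only [circleIntegral, smul_sum]
  rw [intervalIntegral.integral_finset_sum]
  exact fun i hi => (h i hi).out

end AuxLemmas

/-- The remainder of Lagrange interpolation of an analytic function:
`f z − p z = (ω z/(2πi)) ∮_{|ζ−c|=R} f ζ / ((ζ − z) ω ζ) dζ` for `z` in the open disc,
where `p` is the Lagrange interpolant of `f` at the nodes. -/
theorem lagrange_interpolation_remainder (N : ℕ) (c : ℂ) (R : ℝ) (hR : 0 < R)
    (f : ℂ → ℂ) (U : Set ℂ) (hU : IsOpen U) (hUc : Metric.closedBall c R ⊆ U)
    (hf : DifferentiableOn ℂ f U)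
    (zs : Fin N → ℂ) (hz : Function.Injective zs)
    (hmem : ∀ k, zs k ∈ Metric.ball c R)
    (z : ℂ) (hzmem : z ∈ Metric.ball c R) :
    f z - ∑ j, f (zs j) *
        ((∏ k ∈ Finset.univ.erase j, (z - zs k)) /
          (∏ k ∈ Finset.univ.erase j, (zs j - zs k))) =
      (∏ k, (z - zs k)) / (2 * Real.pi * Complex.I) *
        ∮ ζ in C(c, R), f ζ / ((ζ - z) * ∏ k, (ζ - zs k)) := by
  have hden : ∀ j : Fin N, (∏ k ∈ Finset.univ.erase j, (zs j - zs k)) ≠ 0 := by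
    intro j
    rw [Finset.prod_ne_zero_iff]
    intro k hk
    exact sub_ne_zero.mpr fun h => (Finset.mem_erase.mp hk).1.symm (hz h)
  by_cases hznode : ∃ i, z = zs i
  · -- z is a node: both sides vanish
    obtain ⟨i, hi⟩ := hznode
    have hω : (∏ k, (z - zs k)) = 0 :=
      Finset.prod_eq_zero (Finset.mem_univ i) (by rw [hi, sub_self])
    rw [hω, zero_div, zero_mul]
    rw [Finset.sum_eq_single i]
    · rw [hi, div_self (hden i), mul_one, sub_self]
    · intro j _ hji
      have : (∏ k ∈ Finset.univ.erase j, (z - zs k)) = 0 :=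
        Finset.prod_eq_zero (Finset.mem_erase.mpr ⟨hji.symm, Finset.mem_univ i⟩)
          (by rw [hi, sub_self])
      rw [this, zero_div, mul_zero]
    · exact fun h => absurd (Finset.mem_univ i) h
  push_neg at hznode
  -- notation
  set ℓ : Fin N → ℂ := fun j => (∏ k ∈ Finset.univ.erase j, (z - zs k)) /
      (∏ k ∈ Finset.univ.erase j, (zs j - zs k)) with hℓ
  have hball : Metric.ball c R ⊆ U := (Metric.ball_subset_closedBall).trans hUc
  have hd : DiffContOnCl ℂ f (Metric.ball c R) :=
    ⟨hf.mono hball, (hf.continuousOn).mono (by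
      rw [closure_ball c hR.ne']; exact hUc)⟩
  have hsphere : ∀ ζ ∈ Metric.sphere c R, ∀ w ∈ Metric.ball c R, ζ ≠ w := by
    intro ζ hζ w hw h
    rw [h] at hζ
    exact (Metric.mem_ball.mp hw).ne (Metric.mem_sphere.mp hζ)
  have hcont : ContinuousOn f (Metric.sphere c R) :=
    hf.continuousOn.mono ((Metric.sphere_subset_closedBall).trans hUc)
  -- Cauchy integral formula
  have hC : ∀ w ∈ Metric.ball c R,
      (∮ ζ in C(c, R), f ζ / (ζ - w)) = (2 * Real.pi * Complex.I) * f w := by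
    intro w hw
    have := hd.circleIntegral_sub_inv_smul hw
    simpa [div_eq_inv_mul, smul_eq_mul] using this
  -- integrability
  have hint : ∀ w ∈ Metric.ball c R, CircleIntegrable (fun ζ => f ζ / (ζ - w)) c R := by
    intro w hw
    refine ContinuousOn.circleIntegrable hR.le ?_
    exact hcont.div (continuousOn_id.sub continuousOn_const)
      fun ζ hζ => sub_ne_zero.mpr (hsphere ζ hζ w hw)
  have hintsum : CircleIntegrable (fun ζ => ∑ j, ℓ j * (f ζ / (ζ - zs j))) c R := by
    refine ContinuousOn.circleIntegrable hR.le ?_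
    refine continuousOn_finset_sum _ fun j _ => ContinuousOn.const_smul ?_ (ℓ j)
    exact hcont.div (continuousOn_id.sub continuousOn_const)
      fun ζ hζ => sub_ne_zero.mpr (hsphere ζ hζ (zs j) (hmem j))
  -- pointwise identity on the sphere
  have hEq : Set.EqOn (fun ζ => (∏ k, (z - zs k)) * (f ζ / ((ζ - z) * ∏ k, (ζ - zs k))))
      (fun ζ => f ζ / (ζ - z) - ∑ j, ℓ j * (f ζ / (ζ - zs j))) (Metric.sphere c R) := by
    intro ζ hζ
    have hζz : ζ - z ≠ 0 := sub_ne_zero.mpr (hsphere ζ hζ z hzmem)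
    have hζk : ∀ k, ζ - zs k ≠ 0 := fun k => sub_ne_zero.mpr (hsphere ζ hζ (zs k) (hmem k))
    have hωζ : (∏ k, (ζ - zs k)) ≠ 0 := Finset.prod_ne_zero_iff.mpr fun k _ => hζk k
    have key := lagrange_key N zs hz z hznode ζ
    have hS : ∑ j, ℓ j * ∏ k ∈ Finset.univ.erase j, (ζ - zs k) =
        ((∏ k, (ζ - zs k)) - ∏ k, (z - zs k)) / (ζ - z) := by
      rw [eq_div_iff hζz, hℓ]
      linear_combination -key
    have hterm : ∀ j : Fin N, ℓ j * (f ζ / (ζ - zs j)) =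
        f ζ * (ℓ j * ∏ k ∈ Finset.univ.erase j, (ζ - zs k)) / (∏ k, (ζ - zs k)) := by
      intro j
      rw [← Finset.mul_prod_erase Finset.univ _ (Finset.mem_univ j)]
      have h1 := hζk j
      have h2 : (∏ k ∈ Finset.univ.erase j, (ζ - zs k)) ≠ 0 :=
        Finset.prod_ne_zero_iff.mpr fun k _ => hζk k
      field_simp
    have hsum : ∑ j, ℓ j * (f ζ / (ζ - zs j)) =
        f ζ * (((∏ k, (ζ - zs k)) - ∏ k, (z - zs k)) / (ζ - z)) / (∏ k, (ζ - zs k)) := by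
      rw [Finset.sum_congr rfl fun j _ => hterm j, ← Finset.sum_div, ← Finset.mul_sum, hS]
    show (∏ k, (z - zs k)) * (f ζ / ((ζ - z) * ∏ k, (ζ - zs k))) =
        f ζ / (ζ - z) - ∑ j, ℓ j * (f ζ / (ζ - zs j))
    rw [hsum]
    field_simp
    ring
  -- integrability of each summand
  have hintj : ∀ j : Fin N, CircleIntegrable (fun ζ => ℓ j * (f ζ / (ζ - zs j))) c R := by
    intro j
    refine ContinuousOn.circleIntegrable hR.le ?_
    exact (ContinuousOn.const_smul (hcont.div (continuousOn_id.sub continuousOn_const)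
      fun ζ hζ => sub_ne_zero.mpr (hsphere ζ hζ (zs j) (hmem j))) (ℓ j))
  have h2πI : (2 * Real.pi * Complex.I : ℂ) ≠ 0 := by
    simp [Real.pi_ne_zero, Complex.I_ne_zero]
  have e1 : (∏ k, (z - zs k)) / (2 * Real.pi * Complex.I) *
        (∮ ζ in C(c, R), f ζ / ((ζ - z) * ∏ k, (ζ - zs k)))
      = (2 * Real.pi * Complex.I)⁻¹ *
        ∮ ζ in C(c, R), (∏ k, (z - zs k)) * (f ζ / ((ζ - z) * ∏ k, (ζ - zs k))) := by
    rw [circleIntegral.integral_const_mul, div_eq_mul_inv]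
    ring
  rw [e1, circleIntegral.integral_congr hR.le hEq,
    circleIntegral.integral_sub (hint z hzmem) hintsum,
    circleIntegral_finset_sum _ _ _ _ fun j _ => hintj j, hC z hzmem]
  have e2 : ∀ j : Fin N, (∮ ζ in C(c, R), ℓ j * (f ζ / (ζ - zs j)))
      = ℓ j * ((2 * Real.pi * Complex.I) * f (zs j)) := by
    intro j
    rw [circleIntegral.integral_const_mul, hC (zs j) (hmem j)]
  rw [Finset.sum_congr rfl fun j _ => e2 j]
  have e3 : ∑ j, ℓ j * ((2 * Real.pi * Complex.I) * f (zs j))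
      = (2 * Real.pi * Complex.I) * ∑ j, f (zs j) * ℓ j := by
    rw [Finset.mul_sum]
    exact Finset.sum_congr rfl fun j _ => by ring
  rw [e3, ← mul_sub, inv_mul_cancel_left₀ h2πI]
end

section
/- Let m ≥ 0, set N = 2m+1, let z_1,…,z_N be complex numbers such that e^{iz_1},…,e^{iz_N} are pairwise distinct, and let D be the N×N complex matrix with D_{jj} = (1/2) Σ_{k≠j} cot((z_j − z_k)/2) and, for i ≠ j, D_{ij} = (1/2) csc((z_i − z_j)/2) · ∏_{k≠i} sin((z_i − z_k)/2) / ∏_{k≠j} sin((z_j − z_k)/2). If f is a trigonometric polynomial of degree at most m, then for every i, f'(z_i) = Σ_{j=1}^N D_{ij} f(z_j). -/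
open Finset Polynomial

lemma derivative_finset_prod {ι : Type*} [DecidableEq ι] (s : Finset ι) (f : ι → Polynomial ℂ) :
    Polynomial.derivative (∏ a ∈ s, f a) =
      ∑ a ∈ s, (∏ b ∈ s.erase a, f b) * Polynomial.derivative (f a) := by
  induction s using Finset.induction_on with
  | empty => simp
  | insert a s h ih =>
    rw [Finset.prod_insert h, Polynomial.derivative_mul, Finset.sum_insert h,
      Finset.erase_insert h, ih, Finset.mul_sum, mul_comm (Polynomial.derivative (f a))]
    congr 1
    refine Finset.sum_congr rfl fun b hb => ?_
    have hba : b ≠ a := fun hh => h (hh ▸ hb)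
    rw [Finset.erase_insert_of_ne hba.symm, Finset.prod_insert
      (fun hh => h (Finset.mem_of_mem_erase hh))]
    ring

noncomputable def cc {N : ℕ} (w : Fin N → ℂ) (i j : Fin N) : ℂ :=
  Polynomial.eval (w i) (Polynomial.derivative (Lagrange.basis Finset.univ w j))

lemma sum_c_pow {N : ℕ} (w : Fin N → ℂ) (hw : Function.Injective w) (n : ℕ) (hn : n < N)
    (i : Fin N) : ∑ j, (w j) ^ n * cc w i j = (n : ℂ) * (w i) ^ (n - 1) := by
  have hdeg : ((X : ℂ[X]) ^ n).degree < (univ : Finset (Fin N)).card := by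
    simpa [Polynomial.degree_X_pow] using (by exact_mod_cast hn : (n : WithBot ℕ) < N)
  have h := Lagrange.eq_interpolate (v := w) (s := univ) hw.injOn hdeg
  have h2 := congrArg (fun p => Polynomial.eval (w i) (Polynomial.derivative p)) h
  simp only [Lagrange.interpolate_apply, Polynomial.derivative_sum,
    Polynomial.derivative_C_mul, Polynomial.eval_finset_sum, Polynomial.eval_mul,
    Polynomial.eval_C, Polynomial.eval_pow, Polynomial.eval_X,
    Polynomial.derivative_X_pow, Polynomial.eval_natCast] at h2
  exact h2.symm

lemma cc_eq {N : ℕ} (w : Fin N → ℂ) (i j : Fin N) :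
    cc w i j = ∑ s ∈ univ.erase j,
      (∏ r ∈ (univ.erase j).erase s, (w j - w r)⁻¹ * (w i - w r)) * (w j - w s)⁻¹ := by
  rw [cc, Lagrange.basis, derivative_finset_prod]
  simp only [Lagrange.basisDivisor,
    Polynomial.derivative_mul, Polynomial.derivative_C, Polynomial.derivative_sub,
    Polynomial.derivative_X, Polynomial.eval_finset_sum, Polynomial.eval_mul,
    Polynomial.eval_prod, Polynomial.eval_C, Polynomial.eval_sub, Polynomial.eval_X,
    zero_mul, zero_add, mul_one, sub_zero, mul_zero]

lemma cc_diag {N : ℕ} (w : Fin N → ℂ) (hw : Function.Injective w) (i : Fin N) :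
    cc w i i = ∑ s ∈ univ.erase i, (w i - w s)⁻¹ := by
  rw [cc_eq]
  refine Finset.sum_congr rfl fun s hs => ?_
  rw [Finset.prod_eq_one, one_mul]
  intro r hr
  have hri : r ≠ i := (Finset.mem_erase.mp (Finset.mem_of_mem_erase hr)).1
  exact inv_mul_cancel₀ (sub_ne_zero.mpr fun h => hri (hw h).symm)

lemma cc_offdiag {N : ℕ} (w : Fin N → ℂ) {i j : Fin N} (hij : i ≠ j) :
    cc w i j = (∏ r ∈ (univ.erase j).erase i, (w i - w r)) /
      (∏ r ∈ univ.erase j, (w j - w r)) := by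
  have hi : i ∈ univ.erase j := Finset.mem_erase.mpr ⟨hij, Finset.mem_univ i⟩
  rw [cc_eq, Finset.sum_eq_single i]
  · rw [Finset.prod_mul_distrib, div_eq_mul_inv, ← Finset.prod_inv_distrib,
      ← Finset.mul_prod_erase _ (fun r => (w j - w r)⁻¹) hi]
    ring
  · intro s hs hsi
    rw [Finset.prod_eq_zero (Finset.mem_erase.mpr ⟨fun h => hsi h.symm, hi⟩), zero_mul]
    simp
  · intro h; exact absurd hi h
open Finset Polynomial Complex

section
variable (zs : ℂ → ℂ)

lemma sin_formula (za zb : ℂ) :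
    Complex.sin ((za - zb) / 2) =
      (Complex.exp (Complex.I * za) - Complex.exp (Complex.I * zb)) /
        (2 * Complex.I * Complex.exp (Complex.I * za / 2) * Complex.exp (Complex.I * zb / 2)) := by
  have e1 : Complex.exp (-((za - zb) / 2) * Complex.I) =
      Complex.exp (Complex.I * zb / 2) / Complex.exp (Complex.I * za / 2) := by
    rw [← Complex.exp_sub]; congr 1; ring
  have e2 : Complex.exp ((za - zb) / 2 * Complex.I) =
      Complex.exp (Complex.I * za / 2) / Complex.exp (Complex.I * zb / 2) := by
    rw [← Complex.exp_sub]; congr 1; ring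
  have ha : Complex.exp (Complex.I * za) = Complex.exp (Complex.I * za / 2) ^ 2 := by
    rw [sq, ← Complex.exp_add]; congr 1; ring
  have hb : Complex.exp (Complex.I * zb) = Complex.exp (Complex.I * zb / 2) ^ 2 := by
    rw [sq, ← Complex.exp_add]; congr 1; ring
  rw [Complex.sin, e1, e2, ha, hb]
  field_simp [Complex.exp_ne_zero, Complex.I_ne_zero]
  ring_nf
  rw [Complex.I_sq]
  ring

lemma cos_formula (za zb : ℂ) :
    Complex.cos ((za - zb) / 2) =
      (Complex.exp (Complex.I * za) + Complex.exp (Complex.I * zb)) /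
        (2 * Complex.exp (Complex.I * za / 2) * Complex.exp (Complex.I * zb / 2)) := by
  have e1 : Complex.exp (-((za - zb) / 2) * Complex.I) =
      Complex.exp (Complex.I * zb / 2) / Complex.exp (Complex.I * za / 2) := by
    rw [← Complex.exp_sub]; congr 1; ring
  have e2 : Complex.exp ((za - zb) / 2 * Complex.I) =
      Complex.exp (Complex.I * za / 2) / Complex.exp (Complex.I * zb / 2) := by
    rw [← Complex.exp_sub]; congr 1; ring
  have ha : Complex.exp (Complex.I * za) = Complex.exp (Complex.I * za / 2) ^ 2 := by
    rw [sq, ← Complex.exp_add]; congr 1; ring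
  have hb : Complex.exp (Complex.I * zb) = Complex.exp (Complex.I * zb / 2) ^ 2 := by
    rw [sq, ← Complex.exp_add]; congr 1; ring
  rw [Complex.cos, e1, e2, ha, hb]
  field_simp [Complex.exp_ne_zero]
end

section
variable {m : ℕ} {zs : Fin (2 * m + 1) → ℂ}

lemma prod_sin_formula (a : Fin (2 * m + 1)) :
    ∏ k ∈ univ.erase a, Complex.sin ((zs a - zs k) / 2) =
      (∏ k ∈ univ.erase a, (Complex.exp (Complex.I * zs a) - Complex.exp (Complex.I * zs k))) /
        ((2 * Complex.I) ^ (2 * m) * Complex.exp (Complex.I * zs a) ^ m *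
          ∏ k ∈ univ.erase a, Complex.exp (Complex.I * zs k / 2)) := by
  have hcard : (univ.erase a).card = 2 * m := by
    simp [Finset.card_erase_of_mem, Finset.card_univ]
  have huw : Complex.exp (Complex.I * zs a / 2) ^ (2 * m) = Complex.exp (Complex.I * zs a) ^ m := by
    rw [pow_mul, sq, ← Complex.exp_add]
    congr 2; ring
  rw [Finset.prod_congr rfl fun k _ => sin_formula (zs a) (zs k)]
  rw [Finset.prod_div_distrib]
  congr 1
  rw [show (fun k => 2 * Complex.I * Complex.exp (Complex.I * zs a / 2) *
      Complex.exp (Complex.I * zs k / 2)) = (fun k => (2 * Complex.I *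
      Complex.exp (Complex.I * zs a / 2)) * Complex.exp (Complex.I * zs k / 2)) from rfl,
    Finset.prod_mul_distrib, Finset.prod_const, hcard, mul_pow, huw]

lemma D_diag (hz : Function.Injective fun k => Complex.exp (Complex.I * zs k)) (i : Fin (2 * m + 1)) :
    (1 / 2 : ℂ) * ∑ k ∈ univ.erase i,
        (Complex.cos ((zs i - zs k) / 2) / Complex.sin ((zs i - zs k) / 2)) =
      Complex.I * Complex.exp (Complex.I * zs i) *
        cc (fun j => Complex.exp (Complex.I * zs j)) i i - Complex.I * m := by
  rw [cc_diag _ hz, Finset.mul_sum, Finset.mul_sum]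
  have hcard : (univ.erase i).card = 2 * m := by
    simp [Finset.card_erase_of_mem, Finset.card_univ]
  have h1 : ∀ k ∈ univ.erase i, (1 / 2 : ℂ) *
      (Complex.cos ((zs i - zs k) / 2) / Complex.sin ((zs i - zs k) / 2)) =
      Complex.I * Complex.exp (Complex.I * zs i) *
        (Complex.exp (Complex.I * zs i) - Complex.exp (Complex.I * zs k))⁻¹ - Complex.I / 2 := by
    intro k hk
    have hki : k ≠ i := (Finset.mem_erase.mp hk).1
    have hne : Complex.exp (Complex.I * zs i) - Complex.exp (Complex.I * zs k) ≠ 0 :=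
      sub_ne_zero.mpr fun h => hki (hz h).symm
    have hsne : Complex.sin ((zs i - zs k) / 2) ≠ 0 := by
      rw [sin_formula]
      exact div_ne_zero hne (by
        exact mul_ne_zero (mul_ne_zero (mul_ne_zero two_ne_zero Complex.I_ne_zero)
          (Complex.exp_ne_zero _)) (Complex.exp_ne_zero _))
    have hq : Complex.cos ((zs i - zs k) / 2) / Complex.sin ((zs i - zs k) / 2) =
        Complex.I * (Complex.exp (Complex.I * zs i) + Complex.exp (Complex.I * zs k)) /
          (Complex.exp (Complex.I * zs i) - Complex.exp (Complex.I * zs k)) := by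
      rw [div_eq_div_iff hsne hne, cos_formula, sin_formula]
      field_simp [Complex.exp_ne_zero, Complex.I_ne_zero]
    rw [hq]
    field_simp [hne]
    ring
  rw [Finset.sum_congr rfl h1, Finset.sum_sub_distrib, Finset.sum_const, hcard]
  push_cast
  ring

lemma offdiag_helper (s qij qj ri ui uj p q c2 : ℂ)
    (hs : s ≠ 0) (hqj : qj ≠ 0) (hri : ri ≠ 0)
    (hui : ui ≠ 0) (huj : uj ≠ 0) (hp : p ≠ 0) (hc2 : c2 ≠ 0) :
    1 / 2 * (2 * Complex.I * ui * uj / s) *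
      (s * qij / (c2 * p * ri) / (qj / (c2 * q * (ui * ri / uj)))) =
    Complex.I * ui ^ 2 * (q / p) * (qij / qj) := by
  field_simp [mul_comm, mul_assoc, mul_left_comm]

lemma D_offdiag (hz : Function.Injective fun k => Complex.exp (Complex.I * zs k))
    {i j : Fin (2 * m + 1)} (hij : i ≠ j) :
    (1 / 2 : ℂ) * (1 / Complex.sin ((zs i - zs j) / 2)) *
      ((∏ k ∈ univ.erase i, Complex.sin ((zs i - zs k) / 2)) /
        (∏ k ∈ univ.erase j, Complex.sin ((zs j - zs k) / 2))) =
      Complex.I * Complex.exp (Complex.I * zs i) *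
        (Complex.exp (Complex.I * zs j) ^ m / Complex.exp (Complex.I * zs i) ^ m) *
        cc (fun j => Complex.exp (Complex.I * zs j)) i j := by
  have hne : ∀ a b : Fin (2 * m + 1), a ≠ b →
      Complex.exp (Complex.I * zs a) - Complex.exp (Complex.I * zs b) ≠ 0 :=
    fun a b hab => sub_ne_zero.mpr fun h => hab (hz h)
  have hji : j ∈ univ.erase i := Finset.mem_erase.mpr ⟨hij.symm, Finset.mem_univ j⟩
  have hQ : ∏ k ∈ univ.erase i, (Complex.exp (Complex.I * zs i) - Complex.exp (Complex.I * zs k)) =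
      (Complex.exp (Complex.I * zs i) - Complex.exp (Complex.I * zs j)) *
        ∏ k ∈ (univ.erase j).erase i,
          (Complex.exp (Complex.I * zs i) - Complex.exp (Complex.I * zs k)) := by
    rw [← Finset.mul_prod_erase (univ.erase i) _ hji, Finset.erase_right_comm]
  have hR : (∏ k ∈ univ.erase j, Complex.exp (Complex.I * zs k / 2)) =
      Complex.exp (Complex.I * zs i / 2) * (∏ k ∈ univ.erase i, Complex.exp (Complex.I * zs k / 2))
        / Complex.exp (Complex.I * zs j / 2) := by
    rw [eq_div_iff (Complex.exp_ne_zero _), mul_comm]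
    exact (Finset.mul_prod_erase univ (fun k => Complex.exp (Complex.I * zs k / 2))
      (Finset.mem_univ j)).trans (Finset.mul_prod_erase univ
      (fun k => Complex.exp (Complex.I * zs k / 2)) (Finset.mem_univ i)).symm
  have hQjne : (∏ k ∈ univ.erase j,
      (Complex.exp (Complex.I * zs j) - Complex.exp (Complex.I * zs k))) ≠ 0 :=
    Finset.prod_ne_zero_iff.mpr fun k hk => hne j k (Finset.mem_erase.mp hk).1.symm
  have hRine : (∏ k ∈ univ.erase i, Complex.exp (Complex.I * zs k / 2)) ≠ 0 :=
    Finset.prod_ne_zero_iff.mpr fun k _ => Complex.exp_ne_zero _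
  rw [cc_offdiag _ hij, prod_sin_formula, prod_sin_formula, sin_formula, one_div_div, hQ, hR]
  have h2I : ((2 : ℂ) * Complex.I) ^ (2 * m) ≠ 0 :=
    pow_ne_zero _ (mul_ne_zero two_ne_zero Complex.I_ne_zero)
  have hwi : Complex.exp (Complex.I * zs i) = Complex.exp (Complex.I * zs i / 2) ^ 2 := by
    rw [sq, ← Complex.exp_add]; congr 1; ring
  rw [hwi]
  exact offdiag_helper _ _ _ _ _ _ _ _ _ (by rw [← hwi]; exact hne i j hij) hQjne hRine
    (Complex.exp_ne_zero _) (Complex.exp_ne_zero _)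
    (pow_ne_zero _ (pow_ne_zero _ (Complex.exp_ne_zero _))) h2I
end

section
variable {m : ℕ} {zs : Fin (2 * m + 1) → ℂ}

lemma key_sum (hz : Function.Injective fun k => Complex.exp (Complex.I * zs k))
    {D : Matrix (Fin (2 * m + 1)) (Fin (2 * m + 1)) ℂ}
    (hD : ∀ i j, D i j =
      if i = j then
        (1 / 2) * ∑ k ∈ Finset.univ.erase i,
          (Complex.cos ((zs i - zs k) / 2) / Complex.sin ((zs i - zs k) / 2))
      else
        (1 / 2) * (1 / Complex.sin ((zs i - zs j) / 2)) *
          ((∏ k ∈ Finset.univ.erase i, Complex.sin ((zs i - zs k) / 2)) /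
            (∏ k ∈ Finset.univ.erase j, Complex.sin ((zs j - zs k) / 2))))
    (i : Fin (2 * m + 1)) (n : ℕ) (hn : n ≤ 2 * m) :
    ∑ j, D i j * (Complex.exp (Complex.I * zs j) ^ n / Complex.exp (Complex.I * zs j) ^ m) =
      Complex.I * ((n : ℂ) - m) *
        (Complex.exp (Complex.I * zs i) ^ n / Complex.exp (Complex.I * zs i) ^ m) := by
  set w : Fin (2 * m + 1) → ℂ := fun j => Complex.exp (Complex.I * zs j) with hwdef
  simp only [show ∀ a, Complex.exp (Complex.I * zs a) = w a from fun a => rfl]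
  have hwne : ∀ a, w a ≠ 0 := fun a => Complex.exp_ne_zero _
  have hDc : ∀ j, D i j = Complex.I * w i * (w j ^ m / w i ^ m) * cc w i j -
      (if i = j then Complex.I * m else 0) := by
    intro j
    rw [hD i j]
    by_cases h : i = j
    · subst h
      rw [if_pos rfl, if_pos rfl, D_diag hz i, div_self (pow_ne_zero _ (hwne i))]
      ring
    · rw [if_neg h, if_neg h, D_offdiag hz h, sub_zero]
  have hterm : ∀ j, D i j * (w j ^ n / w j ^ m) =
      Complex.I * w i / w i ^ m * (w j ^ n * cc w i j) -
        (if i = j then Complex.I * m * (w i ^ n / w i ^ m) else 0) := by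
    intro j
    rw [hDc j]
    by_cases h : i = j
    · subst h
      rw [if_pos rfl, if_pos rfl, div_self (pow_ne_zero _ (hwne i))]
      ring
    · rw [if_neg h, if_neg h, sub_zero, sub_zero]
      have hcancel : w j ^ m / w i ^ m * (w j ^ n / w j ^ m) = w j ^ n / w i ^ m := by
        rw [div_mul_div_comm, mul_comm (w j ^ m) (w j ^ n),
          mul_div_mul_right _ _ (pow_ne_zero _ (hwne j))]
      calc Complex.I * w i * (w j ^ m / w i ^ m) * cc w i j * (w j ^ n / w j ^ m)
          = Complex.I * w i * cc w i j * (w j ^ m / w i ^ m * (w j ^ n / w j ^ m)) := by ring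
        _ = Complex.I * w i * cc w i j * (w j ^ n / w i ^ m) := by rw [hcancel]
        _ = Complex.I * w i / w i ^ m * (w j ^ n * cc w i j) := by ring
  rw [Finset.sum_congr rfl fun j _ => hterm j, Finset.sum_sub_distrib, ← Finset.mul_sum,
    sum_c_pow w hz n (by omega), Finset.sum_ite_eq univ i, if_pos (Finset.mem_univ i)]
  cases n with
  | zero => simp
  | succ k =>
    simp only [Nat.add_sub_cancel]
    push_cast
    field_simp
    ring
end

section
variable {m : ℕ} {zs : Fin (2 * m + 1) → ℂ}

lemma exp_pow (k : ℕ) (j : Fin (2 * m + 1)) :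
    Complex.exp ((k : ℂ) * zs j * Complex.I) = Complex.exp (Complex.I * zs j) ^ k := by
  rw [← Complex.exp_nat_mul]; congr 1; ring

lemma exp_pow_neg (k : ℕ) (j : Fin (2 * m + 1)) :
    Complex.exp (-((k : ℂ) * zs j) * Complex.I) = (Complex.exp (Complex.I * zs j) ^ k)⁻¹ := by
  rw [show -((k : ℂ) * zs j) * Complex.I = -((k : ℂ) * zs j * Complex.I) by ring,
    Complex.exp_neg, exp_pow]

lemma cos_w (k : ℕ) (j : Fin (2 * m + 1)) :
    Complex.cos ((k : ℂ) * zs j) =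
      (Complex.exp (Complex.I * zs j) ^ k + (Complex.exp (Complex.I * zs j) ^ k)⁻¹) / 2 := by
  rw [Complex.cos, exp_pow, exp_pow_neg]

lemma sin_w (k : ℕ) (j : Fin (2 * m + 1)) :
    Complex.sin ((k : ℂ) * zs j) =
      ((Complex.exp (Complex.I * zs j) ^ k)⁻¹ - Complex.exp (Complex.I * zs j) ^ k) *
        Complex.I / 2 := by
  rw [Complex.sin, exp_pow, exp_pow_neg]

lemma pow_div_A (k : ℕ) (j : Fin (2 * m + 1)) :
    Complex.exp (Complex.I * zs j) ^ (m + k) / Complex.exp (Complex.I * zs j) ^ m =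
      Complex.exp (Complex.I * zs j) ^ k := by
  rw [pow_add, mul_comm, mul_div_assoc, div_self (pow_ne_zero _ (Complex.exp_ne_zero _)), mul_one]

lemma pow_div_B {k : ℕ} (hk : k ≤ m) (j : Fin (2 * m + 1)) :
    Complex.exp (Complex.I * zs j) ^ (m - k) / Complex.exp (Complex.I * zs j) ^ m =
      (Complex.exp (Complex.I * zs j) ^ k)⁻¹ := by
  have h : Complex.exp (Complex.I * zs j) ^ (m - k) * Complex.exp (Complex.I * zs j) ^ k =
      Complex.exp (Complex.I * zs j) ^ m := by
    rw [← pow_add]; congr 1; omega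
  rw [div_eq_iff (pow_ne_zero _ (Complex.exp_ne_zero _)), ← h,
    mul_comm (Complex.exp (Complex.I * zs j) ^ (m - k)) (Complex.exp (Complex.I * zs j) ^ k),
    inv_mul_cancel_left₀ (pow_ne_zero _ (Complex.exp_ne_zero _))]
end

section
variable {m : ℕ} {zs : Fin (2 * m + 1) → ℂ}
  {D : Matrix (Fin (2 * m + 1)) (Fin (2 * m + 1)) ℂ}

variable (hz : Function.Injective fun k => Complex.exp (Complex.I * zs k))
  (hD : ∀ i j, D i j =
      if i = j then
        (1 / 2) * ∑ k ∈ Finset.univ.erase i,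
          (Complex.cos ((zs i - zs k) / 2) / Complex.sin ((zs i - zs k) / 2))
      else
        (1 / 2) * (1 / Complex.sin ((zs i - zs j) / 2)) *
          ((∏ k ∈ Finset.univ.erase i, Complex.sin ((zs i - zs k) / 2)) /
            (∏ k ∈ Finset.univ.erase j, Complex.sin ((zs j - zs k) / 2))))
  (i : Fin (2 * m + 1))

include hz hD

lemma sum_D_zero : ∑ j, D i j = 0 := by
  have h := key_sum hz hD i m (by omega)
  rw [Finset.sum_congr rfl (fun j _ => by
        rw [div_self (pow_ne_zero _ (Complex.exp_ne_zero _)), mul_one]),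
    sub_self, mul_zero, zero_mul] at h
  exact h

lemma sum_D_cos {k : ℕ} (hk : k ≤ m) :
    ∑ j, D i j * Complex.cos ((k : ℂ) * zs j) = -(k : ℂ) * Complex.sin ((k : ℂ) * zs i) := by
  have e1 := key_sum hz hD i (m + k) (by omega)
  have e2 := key_sum hz hD i (m - k) (by omega)
  have hterm : ∀ j, D i j * Complex.cos ((k : ℂ) * zs j) =
      (D i j * (Complex.exp (Complex.I * zs j) ^ (m + k) / Complex.exp (Complex.I * zs j) ^ m) +
       D i j * (Complex.exp (Complex.I * zs j) ^ (m - k) / Complex.exp (Complex.I * zs j) ^ m)) / 2 := by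
    intro j
    rw [cos_w, pow_div_A, pow_div_B hk]
    ring
  rw [Finset.sum_congr rfl fun j _ => hterm j, ← Finset.sum_div, Finset.sum_add_distrib, e1, e2,
    pow_div_A, pow_div_B hk, sin_w]
  push_cast [Nat.cast_sub hk]
  ring

lemma sum_D_sin {k : ℕ} (hk : k ≤ m) :
    ∑ j, D i j * Complex.sin ((k : ℂ) * zs j) = (k : ℂ) * Complex.cos ((k : ℂ) * zs i) := by
  have e1 := key_sum hz hD i (m + k) (by omega)
  have e2 := key_sum hz hD i (m - k) (by omega)
  have hterm : ∀ j, D i j * Complex.sin ((k : ℂ) * zs j) =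
      (D i j * (Complex.exp (Complex.I * zs j) ^ (m - k) / Complex.exp (Complex.I * zs j) ^ m) -
       D i j * (Complex.exp (Complex.I * zs j) ^ (m + k) / Complex.exp (Complex.I * zs j) ^ m)) *
        Complex.I / 2 := by
    intro j
    rw [sin_w, pow_div_A, pow_div_B hk]
    ring
  rw [Finset.sum_congr rfl fun j _ => hterm j]
  simp only [← Finset.sum_div, ← Finset.sum_mul, Finset.sum_sub_distrib]
  rw [e1, e2, pow_div_A, pow_div_B hk, cos_w]
  push_cast [Nat.cast_sub hk]
  ring_nf
  rw [Complex.I_sq]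
  ring
end

/-- The trigonometric differentiation matrix (with `cot x = cos x / sin x` and
`csc x = 1 / sin x`) is exact on trigonometric polynomials of degree at most `m`,
using `N = 2m+1` nodes whose exponentials are pairwise distinct:
`f'(z i) = Σ_j D i j * f (z j)`. -/
theorem trigonometric_differentiation_matrix (m : ℕ) (zs : Fin (2 * m + 1) → ℂ)
    (hz : Function.Injective fun k => Complex.exp (Complex.I * zs k))
    (D : Matrix (Fin (2 * m + 1)) (Fin (2 * m + 1)) ℂ)
    (hD : ∀ i j, D i j =
      if i = j then
        (1 / 2) * ∑ k ∈ Finset.univ.erase i,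
          (Complex.cos ((zs i - zs k) / 2) / Complex.sin ((zs i - zs k) / 2))
      else
        (1 / 2) * (1 / Complex.sin ((zs i - zs j) / 2)) *
          ((∏ k ∈ Finset.univ.erase i, Complex.sin ((zs i - zs k) / 2)) /
            (∏ k ∈ Finset.univ.erase j, Complex.sin ((zs j - zs k) / 2))))
    (a b : ℕ → ℂ) (i : Fin (2 * m + 1)) :
    deriv (fun z : ℂ => a 0 + ∑ k ∈ Finset.Icc 1 m,
        (a k * Complex.cos (k * z) + b k * Complex.sin (k * z))) (zs i) =
      ∑ j, D i j * (a 0 + ∑ k ∈ Finset.Icc 1 m,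
        (a k * Complex.cos (k * zs j) + b k * Complex.sin (k * zs j))) := by
  have hderiv : HasDerivAt (fun z : ℂ => a 0 + ∑ k ∈ Finset.Icc 1 m,
      (a k * Complex.cos (k * z) + b k * Complex.sin (k * z)))
      (∑ k ∈ Finset.Icc 1 m, (a k * (-Complex.sin ((k : ℂ) * zs i) * k) +
        b k * (Complex.cos ((k : ℂ) * zs i) * k))) (zs i) := by
    refine HasDerivAt.const_add _ (HasDerivAt.fun_sum fun k hk => ?_)
    have hlin : HasDerivAt (fun z : ℂ => (k : ℂ) * z) (k : ℂ) (zs i) := by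
      simpa using (hasDerivAt_id (zs i)).const_mul (k : ℂ)
    exact (((Complex.hasDerivAt_cos ((k : ℂ) * zs i)).comp (zs i) hlin).const_mul (a k)).add
      (((Complex.hasDerivAt_sin ((k : ℂ) * zs i)).comp (zs i) hlin).const_mul (b k))
  rw [hderiv.deriv]
  have hexp : ∀ j, D i j * (a 0 + ∑ k ∈ Finset.Icc 1 m,
      (a k * Complex.cos (k * zs j) + b k * Complex.sin (k * zs j))) =
      D i j * a 0 + ∑ k ∈ Finset.Icc 1 m,
        (a k * (D i j * Complex.cos ((k : ℂ) * zs j)) +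
         b k * (D i j * Complex.sin ((k : ℂ) * zs j))) := by
    intro j
    rw [mul_add, Finset.mul_sum]
    congr 1
    exact Finset.sum_congr rfl fun k _ => by ring
  conv_rhs => rw [Finset.sum_congr rfl fun j _ => hexp j, Finset.sum_add_distrib,
    ← Finset.sum_mul, sum_D_zero hz hD i, zero_mul, zero_add, Finset.sum_comm]
  refine Finset.sum_congr rfl fun k hk => ?_
  have hkm : k ≤ m := (Finset.mem_Icc.mp hk).2
  rw [Finset.sum_add_distrib, ← Finset.mul_sum, ← Finset.mul_sum,
    sum_D_cos hz hD i hkm, sum_D_sin hz hD i hkm]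
  ring
end
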